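/- Let P be a convex n-gon in ℝ² and let m be any natural number. Then there exists a guard set G ⊆ P with exactly m guards such that no point of P is hidden from three distinct guards of G; that is, every point x ∈ P is hidden from at most two guards of G. -/

import Mathlib

open Set

noncomputable section

/-- The Euclidean plane ℝ². -/
abbrev Plane : Type := EuclideanSpace ℝ (Fin 2)

/-- `P` is a convex `n`-gon with vertex set `V`: `V` is a finite set of exactly `n ≥ 3`
points, `P` is its convex hull, and each point of `V` is an extreme point of `P`. -/
def IsConvexPolygon (n : ℕ) (V : Finset Plane) (P : Set Plane) : Prop :=
  3 ≤ n ∧ V.card = n ∧ P = convexHull ℝ (V : Set Plane) ∧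
    ∀ v ∈ V, v ∈ Set.extremePoints ℝ P

/-- Point `p` is hidden from guard `g` (w.r.t. guard set `G`): some other guard `b ∈ G`
lies strictly between `g` and `p`. -/
def Hidden (G : Finset Plane) (g p : Plane) : Prop :=
  ∃ b ∈ G, b ≠ g ∧ b ∈ openSegment ℝ g p

/-- `G` `k`-covers `P`: every point of `P` is visible from at least `k` guards of `G`. -/
def KCovers (G : Finset Plane) (P : Set Plane) (k : ℕ) : Prop :=
  ∀ p ∈ P, k ≤ {g ∈ (G : Set Plane) | ¬ Hidden G g p}.ncard

/-- `W` is a wedge: a closed planar convex cone with apex `a` spanned by two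
linearly independent directions `u`, `v`. -/
def IsWedge (W : Set Plane) : Prop :=
  ∃ a u v : Plane, LinearIndependent ℝ ![u, v] ∧
    W = {x | ∃ s t : ℝ, 0 ≤ s ∧ 0 ≤ t ∧ x = a + s • u + t • v}

/-! ### Auxiliary material for Statement 8 -/

namespace Stmt8

attribute [local instance] Classical.propDecidable

lemma finrank_plane : Module.finrank ℝ Plane = 2 := by
  simp [finrank_euclideanSpace_fin]

/-- A line through two points (possibly equal) is a proper affine subspace of the plane. -/
lemma line_ne_top (a b : Plane) : affineSpan ℝ ({a, b} : Set Plane) ≠ ⊤ := by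
  intro h
  have hc : Collinear ℝ ({a, b} : Set Plane) := collinear_pair ℝ a b
  rw [collinear_iff_finrank_le_one] at hc
  have hv : vectorSpan ℝ ({a, b} : Set Plane) = ⊤ := by
    rw [← direction_affineSpan, h, AffineSubspace.direction_top]
  rw [hv, finrank_top] at hc
  rw [finrank_plane] at hc
  omega

lemma mem_line {a b x : Plane} (hab : a ≠ b) (h : Collinear ℝ ({a, b, x} : Set Plane)) :
    x ∈ affineSpan ℝ ({a, b} : Set Plane) :=
  h.mem_affineSpan_of_mem_of_ne (by simp) (by simp) (by simp) hab

lemma triple_perm (x y z : Plane) : ({y, z, x} : Set Plane) = {x, y, z} := by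
  ext w; simp; tauto

lemma triple_swap (x y z : Plane) : ({y, x, z} : Set Plane) = {x, y, z} := by
  ext w; simp; tauto

/-- Equality of unordered pairs. -/
def PEq (a b c d : Plane) : Prop := (a = c ∧ b = d) ∨ (a = d ∧ b = c)

lemma PEq_trans {p q r s p' q' : Plane} (h1 : PEq p q r s) (h2 : PEq p' q' r s) :
    PEq p q p' q' := by
  rcases h1 with ⟨h1a, h1b⟩ | ⟨h1a, h1b⟩ <;> rcases h2 with ⟨h2a, h2b⟩ | ⟨h2a, h2b⟩ <;>
    subst_vars <;> simp [PEq]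

/-- Genericity of a guard configuration: no three guards are collinear and no point off
the guard set lies on three distinct lines through pairs of guards. -/
def Good (G : Finset Plane) : Prop :=
  (∀ a ∈ G, ∀ b ∈ G, ∀ c ∈ G, a ≠ b → a ≠ c → b ≠ c →
      ¬ Collinear ℝ ({a, b, c} : Set Plane)) ∧
  (∀ x : Plane, x ∉ G → ∀ a ∈ G, ∀ b ∈ G, ∀ c ∈ G, ∀ d ∈ G, ∀ e ∈ G, ∀ f ∈ G,
      a ≠ b → c ≠ d → e ≠ f →
      Collinear ℝ ({a, b, x} : Set Plane) → Collinear ℝ ({c, d, x} : Set Plane) →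
      Collinear ℝ ({e, f, x} : Set Plane) →
      PEq a b c d ∨ PEq a b e f ∨ PEq c d e f)

/-- The set of "double points": points lying on two distinct lines through pairs of guards. -/
def DPoints (G : Finset Plane) : Set Plane :=
  {x | ∃ c ∈ G, ∃ d ∈ G, ∃ e ∈ G, ∃ f ∈ G, c ≠ d ∧ e ≠ f ∧ ¬ PEq c d e f ∧
    Collinear ℝ ({c, d, x} : Set Plane) ∧ Collinear ℝ ({e, f, x} : Set Plane)}

/-- Two distinct lines through pairs of a good configuration meet in at most one point. -/
lemma inter_subsingleton {G : Finset Plane} (hG : Good G) {c d e f : Plane}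
    (hc : c ∈ G) (hd : d ∈ G) (he : e ∈ G) (hf : f ∈ G) (hcd : c ≠ d) (hef : e ≠ f)
    (hne : ¬ PEq c d e f) :
    {x : Plane | Collinear ℝ ({c, d, x} : Set Plane) ∧
      Collinear ℝ ({e, f, x} : Set Plane)}.Subsingleton := by
  intro x hx y hy
  by_contra hxy
  have hxcd : x ∈ affineSpan ℝ ({c, d} : Set Plane) := mem_line hcd hx.1
  have hycd : y ∈ affineSpan ℝ ({c, d} : Set Plane) := mem_line hcd hy.1
  have hxef : x ∈ affineSpan ℝ ({e, f} : Set Plane) := mem_line hef hx.2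
  have hyef : y ∈ affineSpan ℝ ({e, f} : Set Plane) := mem_line hef hy.2
  have h1 : Collinear ℝ ({x, y, c, d} : Set Plane) :=
    collinear_insert_insert_of_mem_affineSpan_pair hxcd hycd
  have h2 : Collinear ℝ ({x, y, e, f} : Set Plane) :=
    collinear_insert_insert_of_mem_affineSpan_pair hxef hyef
  have hel : e ∈ affineSpan ℝ ({x, y} : Set Plane) :=
    h2.mem_affineSpan_of_mem_of_ne (by simp) (by simp) (by simp) hxy
  have hfl : f ∈ affineSpan ℝ ({x, y} : Set Plane) :=
    h2.mem_affineSpan_of_mem_of_ne (by simp) (by simp) (by simp) hxy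
  -- one of `e`, `f` is not among `c`, `d`
  have hcase : (e ≠ c ∧ e ≠ d) ∨ (f ≠ c ∧ f ≠ d) := by
    by_contra hcon
    push_neg at hcon
    obtain ⟨hE, hF⟩ := hcon
    apply hne
    by_cases hec : e = c
    · have hfc : f ≠ c := fun h => hef (hec.trans h.symm)
      exact Or.inl ⟨hec.symm, (hF hfc).symm⟩
    · have hed : e = d := hE hec
      have hfcd : f = c := by
        by_cases hfc : f = c
        · exact hfc
        · exact absurd ((hF hfc).trans hed.symm) hef.symm
      exact Or.inr ⟨hfcd.symm, hed.symm⟩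
  have key : ∀ z : Plane, z ∈ G → z ≠ c → z ≠ d →
      z ∈ affineSpan ℝ ({x, y} : Set Plane) → False := by
    intro z hz hzc hzd hzl
    have hmem : z ∈ affineSpan ℝ ({x, y, c, d} : Set Plane) :=
      affineSpan_mono ℝ (by intro w hw; simp at hw ⊢; tauto) hzl
    have h5 : Collinear ℝ (insert z ({x, y, c, d} : Set Plane)) :=
      (collinear_insert_iff_of_mem_affineSpan hmem).mpr h1
    have h3 : Collinear ℝ ({c, d, z} : Set Plane) :=
      h5.subset (by intro w hw; simp at hw ⊢; tauto)
    exact hG.1 c hc d hd z hz hcd (Ne.symm hzc) (Ne.symm hzd) h3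
  rcases hcase with ⟨h1', h2'⟩ | ⟨h1', h2'⟩
  · exact key e he h1' h2' hel
  · exact key f hf h1' h2' hfl

lemma dpoints_countable {G : Finset Plane} (hG : Good G) : (DPoints G).Countable := by
  have hsub : DPoints G ⊆ ⋃ c ∈ (G : Set Plane), ⋃ d ∈ (G : Set Plane), ⋃ e ∈ (G : Set Plane),
      ⋃ f ∈ (G : Set Plane),
      {x : Plane | c ≠ d ∧ e ≠ f ∧ ¬ PEq c d e f ∧
        Collinear ℝ ({c, d, x} : Set Plane) ∧ Collinear ℝ ({e, f, x} : Set Plane)} := by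
    rintro x ⟨c, hc, d, hd, e, he, f, hf, h1, h2, h3, h4, h5⟩
    simp only [Set.mem_iUnion]
    exact ⟨c, hc, d, hd, e, he, f, hf, h1, h2, h3, h4, h5⟩
  refine Set.Countable.mono hsub ?_
  refine Set.Countable.biUnion G.countable_toSet fun c hc => ?_
  refine Set.Countable.biUnion G.countable_toSet fun d hd => ?_
  refine Set.Countable.biUnion G.countable_toSet fun e he => ?_
  refine Set.Countable.biUnion G.countable_toSet fun f hf => ?_
  refine Set.Subsingleton.countable ?_
  intro x hx y hy
  obtain ⟨hcd, hef, hne, hx1, hx2⟩ := hx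
  obtain ⟨-, -, -, hy1, hy2⟩ := hy
  exact inter_subsingleton hG hc hd he hf hcd hef hne ⟨hx1, hx2⟩ ⟨hy1, hy2⟩

open MeasureTheory in
lemma exists_avoiding (U : Set Plane) (hU : IsOpen U) (hne : U.Nonempty)
    (B : Set (Plane × Plane)) (hB : B.Countable) :
    ∃ p ∈ U, ∀ q ∈ B, p ∉ affineSpan ℝ ({q.1, q.2} : Set Plane) := by
  by_contra h
  push_neg at h
  have hsub : U ⊆ ⋃ q ∈ B, (affineSpan ℝ ({q.1, q.2} : Set Plane) : Set Plane) := by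
    intro p hp
    obtain ⟨q, hq, hmem⟩ := h p hp
    exact Set.mem_biUnion hq hmem
  have h0 : volume (⋃ q ∈ B, (affineSpan ℝ ({q.1, q.2} : Set Plane) : Set Plane)) = 0 :=
    (measure_biUnion_null_iff hB).mpr fun q _ =>
      Measure.addHaar_affineSubspace _ _ (line_ne_top _ _)
  have hpos : 0 < volume U := hU.measure_pos volume hne
  exact absurd (le_antisymm ((measure_mono hsub).trans h0.le) zero_le) hpos.ne'

lemma good_insert {U : Set Plane} (hU : IsOpen U) (hne : U.Nonempty) {G : Finset Plane}
    (hG : Good G) : ∃ g ∈ U, g ∉ G ∧ Good (insert g G) := by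
  set B : Set (Plane × Plane) :=
    ((G : Set Plane) ×ˢ (G : Set Plane)) ∪ ((G : Set Plane) ×ˢ DPoints G) with hBdef
  have hB : B.Countable :=
    (G.countable_toSet.prod G.countable_toSet).union
      (G.countable_toSet.prod (dpoints_countable hG))
  obtain ⟨g, hgU, hav⟩ := exists_avoiding U hU hne B hB
  have havG : ∀ a ∈ G, ∀ b ∈ G, g ∉ affineSpan ℝ ({a, b} : Set Plane) := fun a ha b hb =>
    hav (a, b) (Or.inl ⟨ha, hb⟩)
  have havD : ∀ a ∈ G, ∀ q ∈ DPoints G, g ∉ affineSpan ℝ ({a, q} : Set Plane) := fun a ha q hq =>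
    hav (a, q) (Or.inr ⟨ha, hq⟩)
  have hgG : g ∉ G := fun hmem => havG g hmem g hmem (left_mem_affineSpan_pair ℝ g g)
  -- g is not collinear with two distinct old guards
  have hkey : ∀ a ∈ G, ∀ b ∈ G, a ≠ b → ¬ Collinear ℝ ({g, a, b} : Set Plane) := by
    intro a ha b hb hab hcol
    apply havG a ha b hb
    apply mem_line hab
    rwa [triple_perm g a b]
  refine ⟨g, hgU, hgG, ?_, ?_⟩
  · -- no three collinear in insert g G
    intro a ha b hb c hc hab hac hbc hcol
    rcases Finset.mem_insert.mp ha with rfl | haG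
    · rcases Finset.mem_insert.mp hb with rfl | hbG
      · exact hab rfl
      rcases Finset.mem_insert.mp hc with rfl | hcG
      · exact hac rfl
      exact hkey b hbG c hcG hbc hcol
    · rcases Finset.mem_insert.mp hb with rfl | hbG
      · rcases Finset.mem_insert.mp hc with rfl | hcG
        · exact hbc rfl
        exact hkey a haG c hcG hac (by rwa [triple_swap b a c] at hcol)
      · rcases Finset.mem_insert.mp hc with rfl | hcG
        · exact hkey a haG b hbG hab (by rwa [triple_perm c a b] at hcol)
        · exact hG.1 a haG b hbG c hcG hab hac hbc hcol
  · -- the double-point condition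
    intro x hx a ha b hb c hc d hd e he f hf hab hcd hef h1 h2 h3
    have hxg : x ≠ g := fun h => hx (h ▸ Finset.mem_insert_self g G)
    have hxG : x ∉ G := fun h => hx (Finset.mem_insert_of_mem h)
    -- normalize a pair of guards from insert g G
    have norm : ∀ p q : Plane, p ∈ insert g G → q ∈ insert g G → p ≠ q →
        Collinear ℝ ({p, q, x} : Set Plane) →
        (p ∈ G ∧ q ∈ G) ∨
          (∃ w ∈ G, PEq p q g w ∧ Collinear ℝ ({g, w, x} : Set Plane)) := by
      intro p q hp hq hpq hcol
      rcases Finset.mem_insert.mp hp with rfl | hpG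
      · have hqG : q ∈ G := by
          rcases Finset.mem_insert.mp hq with rfl | h
          · exact (hpq rfl).elim
          · exact h
        exact Or.inr ⟨q, hqG, Or.inl ⟨rfl, rfl⟩, hcol⟩
      · rcases Finset.mem_insert.mp hq with rfl | hqG
        · exact Or.inr ⟨p, hpG, Or.inr ⟨rfl, rfl⟩, by rwa [triple_swap q p x] at hcol⟩
        · exact Or.inl ⟨hpG, hqG⟩
    -- two pairs both containing g must be equal
    have two_g : ∀ w1 w2 : Plane, w1 ∈ G → w2 ∈ G →
        Collinear ℝ ({g, w1, x} : Set Plane) → Collinear ℝ ({g, w2, x} : Set Plane) →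
        w1 = w2 := by
      intro w1 w2 hw1 hw2 hc1 hc2
      by_contra hww
      have hm1 : w1 ∈ affineSpan ℝ ({g, x} : Set Plane) := by
        apply hc1.mem_affineSpan_of_mem_of_ne (by simp) (by simp) (by simp) (Ne.symm hxg)
      have hm2 : w2 ∈ affineSpan ℝ ({g, x} : Set Plane) := by
        apply hc2.mem_affineSpan_of_mem_of_ne (by simp) (by simp) (by simp) (Ne.symm hxg)
      have h4 : Collinear ℝ ({w1, w2, g, x} : Set Plane) :=
        collinear_insert_insert_of_mem_affineSpan_pair hm1 hm2
      have h5 : Collinear ℝ ({g, w1, w2} : Set Plane) :=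
        h4.subset (by intro w hw; simp at hw ⊢; tauto)
      exact hkey w1 hw1 w2 hw2 hww h5
    -- a pair containing g together with a double point is impossible
    have one_g : ∀ w ∈ G, Collinear ℝ ({g, w, x} : Set Plane) → x ∈ DPoints G → False := by
      intro w hw hcol hdp
      apply havD w hw x hdp
      apply mem_line (show w ≠ x from fun h => hxG (h ▸ hw))
      rwa [triple_perm g w x]
    rcases norm a b ha hb hab h1 with ⟨haG, hbG⟩ | ⟨w1, hw1, hpe1, hcg1⟩
    · rcases norm c d hc hd hcd h2 with ⟨hcG, hdG⟩ | ⟨w2, hw2, hpe2, hcg2⟩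
      · rcases norm e f he hf hef h3 with ⟨heG, hfG⟩ | ⟨w3, hw3, hpe3, hcg3⟩
        · exact hG.2 x hxG a haG b hbG c hcG d hdG e heG f hfG hab hcd hef h1 h2 h3
        · -- only third pair contains g
          by_cases hpq : PEq a b c d
          · exact Or.inl hpq
          · exact (one_g w3 hw3 hcg3
              ⟨a, haG, b, hbG, c, hcG, d, hdG, hab, hcd, hpq, h1, h2⟩).elim
      · rcases norm e f he hf hef h3 with ⟨heG, hfG⟩ | ⟨w3, hw3, hpe3, hcg3⟩
        · -- only second pair contains g
          by_cases hpq : PEq a b e f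
          · exact Or.inr (Or.inl hpq)
          · exact (one_g w2 hw2 hcg2
              ⟨a, haG, b, hbG, e, heG, f, hfG, hab, hef, hpq, h1, h3⟩).elim
        · -- second and third pairs contain g
          have : w2 = w3 := two_g w2 w3 hw2 hw3 hcg2 hcg3
          subst this
          exact Or.inr (Or.inr (PEq_trans hpe2 hpe3))
    · rcases norm c d hc hd hcd h2 with ⟨hcG, hdG⟩ | ⟨w2, hw2, hpe2, hcg2⟩
      · rcases norm e f he hf hef h3 with ⟨heG, hfG⟩ | ⟨w3, hw3, hpe3, hcg3⟩
        · -- only first pair contains g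
          by_cases hpq : PEq c d e f
          · exact Or.inr (Or.inr hpq)
          · exact (one_g w1 hw1 hcg1
              ⟨c, hcG, d, hdG, e, heG, f, hfG, hcd, hef, hpq, h2, h3⟩).elim
        · -- first and third pairs contain g
          have : w1 = w3 := two_g w1 w3 hw1 hw3 hcg1 hcg3
          subst this
          exact Or.inr (Or.inl (PEq_trans hpe1 hpe3))
      · -- first and second pairs contain g
        have : w1 = w2 := two_g w1 w2 hw1 hw2 hcg1 hcg2
        subst this
        exact Or.inl (PEq_trans hpe1 hpe2)

lemma exists_good (U : Set Plane) (hU : IsOpen U) (hne : U.Nonempty) (m : ℕ) :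
    ∃ G : Finset Plane, ↑G ⊆ U ∧ G.card = m ∧ Good G := by
  induction m with
  | zero =>
      refine ⟨∅, by simp, by simp, ?_, ?_⟩
      · intro a ha; exact (Finset.notMem_empty a ha).elim
      · intro x hx a ha; exact (Finset.notMem_empty a ha).elim
  | succ k ih =>
      obtain ⟨G, hGU, hcard, hG⟩ := ih
      obtain ⟨g, hgU, hgG, hGood⟩ := good_insert hU hne hG
      refine ⟨insert g G, ?_, ?_, hGood⟩
      · rw [Finset.coe_insert]
        exact Set.insert_subset hgU hGU
      · rw [Finset.card_insert_of_notMem hgG, hcard]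

lemma sbtw_of_openSegment {g b x : Plane} (hne : b ≠ g) (h : b ∈ openSegment ℝ g x) :
    Sbtw ℝ g b x := by
  have hgx : g ≠ x := by
    rintro rfl
    rw [openSegment_same] at h
    exact hne h
  refine sbtw_iff_mem_image_Ioo_and_ne.mpr ⟨?_, hgx⟩
  rwa [← openSegment_eq_image_lineMap]

end Stmt8

open Stmt8 in
/-- For any m, one can place exactly m guards in a convex n-gon so that
every point of P is hidden from at most two guards. -/
theorem statement8 (n m : ℕ) (V : Finset Plane) (P : Set Plane)
    (hP : IsConvexPolygon n V P) :
    ∃ G : Finset Plane, ↑G ⊆ P ∧ G.card = m ∧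
      ∀ x ∈ P, {g ∈ (G : Set Plane) | Hidden G g x}.ncard ≤ 2 := by
  obtain ⟨hn, hcard, hhull, hext⟩ := hP
  -- three distinct vertices
  obtain ⟨a, ha, b, hb, c, hc, hab, hac, hbc⟩ :=
    Finset.two_lt_card.mp (by omega : 2 < V.card)
  have hVP : (V : Set Plane) ⊆ P := hhull ▸ subset_convexHull ℝ _
  -- the three vertices are not collinear
  have hncol : ¬ Collinear ℝ ({a, b, c} : Set Plane) := by
    intro hcol
    have hmid : ∀ u v w : Plane, u ∈ V → v ∈ V → w ∈ V → u ≠ w → v ≠ w →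
        Wbtw ℝ u w v → False := by
      intro u v w hu hv hw huw hvw hbtw
      have hsb : Sbtw ℝ u w v := ⟨hbtw, Ne.symm huw, Ne.symm hvw⟩
      have hmem : w ∈ openSegment ℝ u v := by
        rw [openSegment_eq_image_lineMap]
        exact hsb.mem_image_Ioo
      obtain ⟨-, hwext⟩ := mem_extremePoints.mp (hext w hw)
      exact huw ((hwext u (hVP hu) v (hVP hv) hmem).1)
    rcases hcol.wbtw_or_wbtw_or_wbtw with h | h | h
    · exact hmid a c b ha hc hb hab (Ne.symm hbc) h
    · exact hmid b a c hb ha hc hbc hac h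
    · exact hmid c b a hc hb ha (Ne.symm hac) (Ne.symm hab) h
  -- the polygon has nonempty interior
  have hai : AffineIndependent ℝ ![a, b, c] :=
    affineIndependent_iff_not_collinear_set.mpr hncol
  have hspan3 : affineSpan ℝ (Set.range ![a, b, c]) = ⊤ := by
    rw [hai.affineSpan_eq_top_iff_card_eq_finrank_add_one]
    simp [finrank_plane]
  have hspanV : affineSpan ℝ (V : Set Plane) = ⊤ := by
    refine le_antisymm le_top ?_
    rw [← hspan3]
    refine affineSpan_mono ℝ ?_
    rw [Set.range_subset_iff]
    intro i
    fin_cases i <;> simp [ha, hb, hc]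
  have hconv : Convex ℝ P := hhull ▸ convex_convexHull ℝ _
  have hspanP : affineSpan ℝ P = ⊤ := by
    rw [hhull, affineSpan_convexHull]
    exact hspanV
  have hint : (interior P).Nonempty :=
    hconv.interior_nonempty_iff_affineSpan_eq_top.mpr hspanP
  -- place the guards
  obtain ⟨G, hGU, hGcard, hGood⟩ := exists_good (interior P) isOpen_interior hint m
  refine ⟨G, hGU.trans interior_subset, hGcard, ?_⟩
  intro x hxP
  by_contra hgt
  push_neg at hgt
  have hfin : {g ∈ (G : Set Plane) | Hidden G g x}.Finite :=
    G.finite_toSet.subset (Set.sep_subset _ _)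
  obtain ⟨g1, g2, g3, hg1, hg2, hg3, h12, h13, h23⟩ :=
    (Set.two_lt_ncard_iff hfin).mp hgt
  obtain ⟨hg1G, b1, hb1G, hb1ne, hb1seg⟩ := hg1
  obtain ⟨hg2G, b2, hb2G, hb2ne, hb2seg⟩ := hg2
  obtain ⟨hg3G, b3, hb3G, hb3ne, hb3seg⟩ := hg3
  have hs1 : Sbtw ℝ g1 b1 x := sbtw_of_openSegment hb1ne hb1seg
  have hs2 : Sbtw ℝ g2 b2 x := sbtw_of_openSegment hb2ne hb2seg
  have hs3 : Sbtw ℝ g3 b3 x := sbtw_of_openSegment hb3ne hb3seg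
  have hc1 : Collinear ℝ ({g1, b1, x} : Set Plane) := hs1.wbtw.collinear
  have hc2 : Collinear ℝ ({g2, b2, x} : Set Plane) := hs2.wbtw.collinear
  have hc3 : Collinear ℝ ({g3, b3, x} : Set Plane) := hs3.wbtw.collinear
  by_cases hxG : x ∈ G
  · exact hGood.1 g1 hg1G b1 hb1G x hxG (Ne.symm hb1ne) hs1.left_ne_right hs1.ne_right hc1
  · have hpairs := hGood.2 x hxG g1 hg1G b1 hb1G g2 hg2G b2 hb2G g3 hg3G b3 hb3G
      (Ne.symm hb1ne) (Ne.symm hb2ne) (Ne.symm hb3ne) hc1 hc2 hc3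
    have swap : ∀ gi bi gj bj : Plane, gi ≠ gj → PEq gi bi gj bj →
        Sbtw ℝ gi bi x → Sbtw ℝ gj bj x → False := by
      intro gi bi gj bj hij hpe hsi hsj
      rcases hpe with ⟨h1', h2'⟩ | ⟨h1', h2'⟩
      · exact hij h1'
      · subst h1'; subst h2'
        exact hsi.not_swap_left hsj.wbtw
    rcases hpairs with h | h | h
    · exact swap g1 b1 g2 b2 h12 h hs1 hs2
    · exact swap g1 b1 g3 b3 h13 h hs1 hs3
    · exact swap g2 b2 g3 b3 h23 h hs2 hs3
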